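/- For complex a1,b1,a2,b2 and nonnegative integers p1,p2,k,μ: C(k+μ, k) · S_{a1,b1}^{a2,b2,p2}(p1, k+μ) = Σ_{j2=0}^{p2} Σ_{j1=0}^{p1} C(p1,j1) C(p2,j2) · S_{a1,0}^{a2,0,p2−j2}(p1−j1, μ) · S_{a1,b1}^{a2,b2,j2}(j1, k). -/

import Mathlib

open Finset

/-- Stirling numbers of the second kind. -/
def stirling2 : ℕ → ℕ → ℕ
  | 0, 0 => 1
  | 0, _ + 1 => 0
  | _ + 1, 0 => 0
  | p + 1, k + 1 => stirling2 p k + (k + 1) * stirling2 p (k + 1)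

/-- Unsigned Stirling numbers of the first kind. -/
def stirling1 : ℕ → ℕ → ℕ
  | 0, 0 => 1
  | 0, _ + 1 => 0
  | _ + 1, 0 => 0
  | p + 1, k + 1 => stirling1 p k + p * stirling1 p (k + 1)

/-- Stirling numbers of the second kind with integer second argument (0 when negative). -/
def stirling2Z (p : ℕ) (k : ℤ) : ℤ :=
  if k < 0 then 0 else stirling2 p k.toNat

/-- Generalized Stirling number of the second kind
`S_{a1,b1}^{a2,b2,p2}(p1,k)`. -/
noncomputable def gsn (a1 b1 a2 b2 : ℂ) (p1 p2 k : ℕ) : ℂ :=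
  (1 / (k.factorial : ℂ)) * ∑ j ∈ range (k + 1),
    (-1) ^ j * (k.choose j : ℂ) * (a1 * ((k : ℂ) - j) + b1) ^ p1 *
      (a2 * ((k : ℂ) - j) + b2) ^ p2

/-- Generalized Stirling number with integer index (0 when negative). -/
noncomputable def gsnZ (a1 b1 a2 b2 : ℂ) (p1 p2 : ℕ) (k : ℤ) : ℂ :=
  if k < 0 then 0 else gsn a1 b1 a2 b2 p1 p2 k.toNat

lemma aux_reindex (k μ : ℕ) (F : ℕ × ℕ → ℂ)
    (h : ∀ x : ℕ × ℕ, k < x.1 ∨ μ < x.2 → F x = 0) :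
    ∑ j ∈ range (k + μ + 1), ∑ x ∈ Finset.HasAntidiagonal.antidiagonal j, F x =
      ∑ x ∈ range (k + 1) ×ˢ range (μ + 1), F x := by
  have hdisj : (↑(range (k + μ + 1)) : Set ℕ).PairwiseDisjoint Finset.HasAntidiagonal.antidiagonal := by
    intro i _ j _ hij
    simp only [Finset.disjoint_left]
    intro x hx hx'
    exact hij ((Finset.HasAntidiagonal.mem_antidiagonal.mp hx).symm.trans (Finset.HasAntidiagonal.mem_antidiagonal.mp hx'))
  rw [← Finset.sum_biUnion hdisj]
  have h1 : (range (k + μ + 1)).biUnion Finset.HasAntidiagonal.antidiagonal ⊆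
      range (k + μ + 1) ×ˢ range (k + μ + 1) := by
    intro x hx
    simp only [Finset.mem_biUnion, Finset.mem_range] at hx
    obtain ⟨j, hj, hxj⟩ := hx
    have := Finset.HasAntidiagonal.mem_antidiagonal.mp hxj
    simp only [Finset.mem_product, Finset.mem_range]
    omega
  have h2 : range (k + 1) ×ˢ range (μ + 1) ⊆ range (k + μ + 1) ×ˢ range (k + μ + 1) := by
    intro x hx
    simp only [Finset.mem_product, Finset.mem_range] at hx ⊢
    omega
  rw [Finset.sum_subset h1, Finset.sum_subset h2]
  · intro x hx hx'
    simp only [Finset.mem_product, Finset.mem_range] at hx hx'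
    apply h
    omega
  · intro x hx hx'
    simp only [Finset.mem_biUnion, Finset.mem_range, Finset.mem_product] at hx hx'
    apply h
    by_contra hc
    push_neg at hc
    exact hx' ⟨x.1 + x.2, by omega, Finset.HasAntidiagonal.mem_antidiagonal.mpr rfl⟩

lemma sum_swap4 {M : Type*} [AddCommMonoid M] (s1 s2 s3 s4 : Finset ℕ)
    (f : ℕ → ℕ → ℕ → ℕ → M) :
    ∑ a ∈ s1, ∑ b ∈ s2, ∑ c ∈ s3, ∑ d ∈ s4, f a b c d =
      ∑ d ∈ s4, ∑ c ∈ s3, ∑ b ∈ s2, ∑ a ∈ s1, f a b c d := by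
  calc ∑ a ∈ s1, ∑ b ∈ s2, ∑ c ∈ s3, ∑ d ∈ s4, f a b c d
      = ∑ a ∈ s1, ∑ b ∈ s2, ∑ d ∈ s4, ∑ c ∈ s3, f a b c d :=
        Finset.sum_congr rfl fun a _ => Finset.sum_congr rfl fun b _ => Finset.sum_comm
    _ = ∑ a ∈ s1, ∑ d ∈ s4, ∑ b ∈ s2, ∑ c ∈ s3, f a b c d :=
        Finset.sum_congr rfl fun a _ => Finset.sum_comm
    _ = ∑ d ∈ s4, ∑ a ∈ s1, ∑ b ∈ s2, ∑ c ∈ s3, f a b c d := Finset.sum_comm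
    _ = ∑ d ∈ s4, ∑ a ∈ s1, ∑ c ∈ s3, ∑ b ∈ s2, f a b c d :=
        Finset.sum_congr rfl fun d _ => Finset.sum_congr rfl fun a _ => Finset.sum_comm
    _ = ∑ d ∈ s4, ∑ c ∈ s3, ∑ a ∈ s1, ∑ b ∈ s2, f a b c d :=
        Finset.sum_congr rfl fun d _ => Finset.sum_comm
    _ = ∑ d ∈ s4, ∑ c ∈ s3, ∑ b ∈ s2, ∑ a ∈ s1, f a b c d :=
        Finset.sum_congr rfl fun d _ => Finset.sum_congr rfl fun c _ => Finset.sum_comm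

lemma sum_swap4' {M : Type*} [AddCommMonoid M] (s1 s2 s3 s4 : Finset ℕ)
    (f : ℕ → ℕ → ℕ → ℕ → M) :
    ∑ a ∈ s1, ∑ b ∈ s2, ∑ c ∈ s3, ∑ d ∈ s4, f a b c d =
      ∑ c ∈ s3, ∑ d ∈ s4, ∑ a ∈ s1, ∑ b ∈ s2, f a b c d := by
  calc ∑ a ∈ s1, ∑ b ∈ s2, ∑ c ∈ s3, ∑ d ∈ s4, f a b c d
      = ∑ a ∈ s1, ∑ c ∈ s3, ∑ b ∈ s2, ∑ d ∈ s4, f a b c d :=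
        Finset.sum_congr rfl fun a _ => Finset.sum_comm
    _ = ∑ c ∈ s3, ∑ a ∈ s1, ∑ b ∈ s2, ∑ d ∈ s4, f a b c d := Finset.sum_comm
    _ = ∑ c ∈ s3, ∑ a ∈ s1, ∑ d ∈ s4, ∑ b ∈ s2, f a b c d :=
        Finset.sum_congr rfl fun c _ => Finset.sum_congr rfl fun a _ => Finset.sum_comm
    _ = ∑ c ∈ s3, ∑ d ∈ s4, ∑ a ∈ s1, ∑ b ∈ s2, f a b c d :=
        Finset.sum_congr rfl fun c _ => Finset.sum_comm

theorem stmt19 (a1 b1 a2 b2 : ℂ) (p1 p2 k μ : ℕ) :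
    ((k + μ).choose k : ℂ) * gsn a1 b1 a2 b2 p1 p2 (k + μ) =
      ∑ j2 ∈ range (p2 + 1), ∑ j1 ∈ range (p1 + 1),
        (p1.choose j1 : ℂ) * (p2.choose j2 : ℂ) *
          gsn a1 0 a2 0 (p1 - j1) (p2 - j2) μ * gsn a1 b1 a2 b2 j1 j2 k := by
  set T : ℕ → ℕ → ℕ → ℕ → ℂ := fun a b j1 j2 =>
    (-1) ^ (a + b) * (k.choose a : ℂ) * (μ.choose b : ℂ) * (p1.choose j1 : ℂ) *
      (p2.choose j2 : ℂ) * (a1 * ((μ : ℂ) - b)) ^ (p1 - j1) *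
      (a2 * ((μ : ℂ) - b)) ^ (p2 - j2) * (a1 * ((k : ℂ) - a) + b1) ^ j1 *
      (a2 * ((k : ℂ) - a) + b2) ^ j2 with hT
  have hkf : ((k.factorial : ℂ)) ≠ 0 := Nat.cast_ne_zero.mpr k.factorial_ne_zero
  have hμf : ((μ.factorial : ℂ)) ≠ 0 := Nat.cast_ne_zero.mpr μ.factorial_ne_zero
  have hNf : (((k + μ).factorial : ℂ)) ≠ 0 := Nat.cast_ne_zero.mpr (k + μ).factorial_ne_zero
  have hc : ((k + μ).choose k : ℂ) * (1 / ((k + μ).factorial : ℂ)) =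
      1 / (k.factorial : ℂ) * (1 / (μ.factorial : ℂ)) := by
    have h := Nat.add_choose_mul_factorial_mul_factorial k μ
    have h2 : (k + μ).choose μ * (k.factorial * μ.factorial) = (k + μ).factorial := by
      rw [← Nat.mul_assoc]; exact h
    field_simp
    rw [Nat.choose_symm_add]
    exact_mod_cast h
  -- Left side
  have hL : ((k + μ).choose k : ℂ) * gsn a1 b1 a2 b2 p1 p2 (k + μ) =
      ∑ a ∈ range (k + 1), ∑ b ∈ range (μ + 1), ∑ j2 ∈ range (p2 + 1),
        ∑ j1 ∈ range (p1 + 1),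
          1 / (k.factorial : ℂ) * (1 / (μ.factorial : ℂ)) * T a b j1 j2 := by
    have key : (∑ j ∈ range (k + μ + 1),
        (-1 : ℂ) ^ j * ((k + μ).choose j : ℂ) * (a1 * (((k + μ : ℕ) : ℂ) - j) + b1) ^ p1 *
          (a2 * (((k + μ : ℕ) : ℂ) - j) + b2) ^ p2) =
        ∑ a ∈ range (k + 1), ∑ b ∈ range (μ + 1),
          ((-1 : ℂ) ^ (a + b) * (k.choose a : ℂ) * (μ.choose b : ℂ) *
            (a1 * (((k + μ : ℕ) : ℂ) - ((a + b : ℕ) : ℂ)) + b1) ^ p1 *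
            (a2 * (((k + μ : ℕ) : ℂ) - ((a + b : ℕ) : ℂ)) + b2) ^ p2) := by
      rw [← Finset.sum_product']
      rw [← aux_reindex k μ (fun x => (-1 : ℂ) ^ (x.1 + x.2) * (k.choose x.1 : ℂ) *
        (μ.choose x.2 : ℂ) * (a1 * (((k + μ : ℕ) : ℂ) - ((x.1 + x.2 : ℕ) : ℂ)) + b1) ^ p1 *
        (a2 * (((k + μ : ℕ) : ℂ) - ((x.1 + x.2 : ℕ) : ℂ)) + b2) ^ p2)]
      · refine Finset.sum_congr rfl fun j hj => ?_
        rw [Nat.add_choose_eq, Nat.cast_sum, Finset.mul_sum, Finset.sum_mul, Finset.sum_mul]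
        refine Finset.sum_congr rfl fun x hx => ?_
        have hx' := Finset.HasAntidiagonal.mem_antidiagonal.mp hx
        subst hx'
        push_cast
        ring
      · intro x hx
        rcases hx with hx | hx
        · simp [Nat.choose_eq_zero_of_lt hx]
        · simp [Nat.choose_eq_zero_of_lt hx]
    have expand : ∀ a b : ℕ,
        ((-1 : ℂ) ^ (a + b) * (k.choose a : ℂ) * (μ.choose b : ℂ) *
          (a1 * (((k + μ : ℕ) : ℂ) - ((a + b : ℕ) : ℂ)) + b1) ^ p1 *
          (a2 * (((k + μ : ℕ) : ℂ) - ((a + b : ℕ) : ℂ)) + b2) ^ p2) =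
        ∑ j2 ∈ range (p2 + 1), ∑ j1 ∈ range (p1 + 1), T a b j1 j2 := by
      intro a b
      have e1 : a1 * (((k + μ : ℕ) : ℂ) - ((a + b : ℕ) : ℂ)) + b1 =
          (a1 * ((k : ℂ) - a) + b1) + a1 * ((μ : ℂ) - b) := by push_cast; ring
      have e2 : a2 * (((k + μ : ℕ) : ℂ) - ((a + b : ℕ) : ℂ)) + b2 =
          (a2 * ((k : ℂ) - a) + b2) + a2 * ((μ : ℂ) - b) := by push_cast; ring
      rw [e1, e2, add_pow, add_pow]
      simp only [Finset.mul_sum, Finset.sum_mul]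
      refine Finset.sum_congr rfl fun j2 _ => Finset.sum_congr rfl fun j1 _ => ?_
      simp only [hT]
      ring
    rw [gsn, ← mul_assoc, hc, key, Finset.mul_sum]
    refine Finset.sum_congr rfl fun a _ => ?_
    rw [Finset.mul_sum]
    refine Finset.sum_congr rfl fun b _ => ?_
    rw [expand a b, Finset.mul_sum]
    refine Finset.sum_congr rfl fun j2 _ => ?_
    rw [Finset.mul_sum]
  -- Right side
  have hR : ∀ j1 j2 : ℕ,
      (p1.choose j1 : ℂ) * (p2.choose j2 : ℂ) * gsn a1 0 a2 0 (p1 - j1) (p2 - j2) μ *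
        gsn a1 b1 a2 b2 j1 j2 k =
      ∑ a ∈ range (k + 1), ∑ b ∈ range (μ + 1),
        1 / (k.factorial : ℂ) * (1 / (μ.factorial : ℂ)) * T a b j1 j2 := by
    intro j1 j2
    rw [gsn, gsn]
    simp only [Finset.mul_sum, Finset.sum_mul]
    refine Finset.sum_congr rfl fun a _ => ?_
    refine Finset.sum_congr rfl fun b _ => ?_
    simp only [hT]
    ring
  rw [hL, sum_swap4']
  exact Finset.sum_congr rfl fun j2 _ => Finset.sum_congr rfl fun j1 _ => (hR j1 j2).symm
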